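/- Let F be a field, k ≥ 3, and let s, t ≥ 0 be fixed integers. Then M_k(F) does not satisfy the polynomial identity [[x₁,x₂]^s ([x₄,x₂] + [x₁,x₅]) [x₁,x₂]^t, x₃] = 0; explicitly, there exist x₁, x₂, x₃, x₄, x₅ ∈ M_k(F) (for instance x₁ = e_{12}, x₂ = e_{21}, x₃ = e_{13}, x₄ = e_{12}, x₅ = 0) such that [[x₁,x₂]^s ([x₄,x₂] + [x₁,x₅]) [x₁,x₂]^t, x₃] ≠ 0. -/

import Mathlib

open Matrix

/-- For `k ≥ 3` and any `s, t ≥ 0`, the ring `M_k(F)` does not satisfy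
the identity `[[x₁,x₂]^s ([x₄,x₂] + [x₁,x₅]) [x₁,x₂]^t, x₃] = 0`: there exist
`x₁, x₂, x₃, x₄, x₅` (e.g. `x₁ = e₁₂, x₂ = e₂₁, x₃ = e₁₃, x₄ = e₁₂, x₅ = 0`) for which
the expression is nonzero. -/
theorem stmt_7 {F : Type*} [Field F] {k : ℕ} (hk : 3 ≤ k) (s t : ℕ) :
    ∃ x₁ x₂ x₃ x₄ x₅ : Matrix (Fin k) (Fin k) F,
      ((x₁ * x₂ - x₂ * x₁) ^ s * ((x₄ * x₂ - x₂ * x₄) + (x₁ * x₅ - x₅ * x₁)) *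
          (x₁ * x₂ - x₂ * x₁) ^ t) * x₃ -
        x₃ * ((x₁ * x₂ - x₂ * x₁) ^ s * ((x₄ * x₂ - x₂ * x₄) + (x₁ * x₅ - x₅ * x₁)) *
          (x₁ * x₂ - x₂ * x₁) ^ t) ≠ 0 := by
  have h0 : (0 : ℕ) < k := by omega
  have h1 : (1 : ℕ) < k := by omega
  have h2 : (2 : ℕ) < k := by omega
  set i0 : Fin k := ⟨0, h0⟩
  set i1 : Fin k := ⟨1, h1⟩
  set i2 : Fin k := ⟨2, h2⟩
  have h01 : i0 ≠ i1 := by simp [i0, i1, Fin.ext_iff]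
  have h02 : i0 ≠ i2 := by simp [i0, i2, Fin.ext_iff]
  have h12 : i1 ≠ i2 := by simp [i1, i2, Fin.ext_iff]
  set E12 : Matrix (Fin k) (Fin k) F := single i0 i1 1
  set E21 : Matrix (Fin k) (Fin k) F := single i1 i0 1
  set E13 : Matrix (Fin k) (Fin k) F := single i0 i2 1
  set d : Matrix (Fin k) (Fin k) F := E12 * E21 - E21 * E12 with hd_def
  have hd : d = single i0 i0 1 - single i1 i1 1 := by
    simp [hd_def, E12, E21, single_mul_single_same]
  have hdE : d * E13 = E13 := by
    rw [hd]
    simp [E13, sub_mul, single_mul_single_same, Matrix.single_mul_single_of_ne (1 : F) i1 i1 i0 h01.symm (1 : F)]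
  have hEd : E13 * d = 0 := by
    rw [hd]
    simp [E13, mul_sub, Matrix.single_mul_single_of_ne (1 : F) i0 i2 i0 h02.symm (1 : F), Matrix.single_mul_single_of_ne (1 : F) i0 i2 i1 h12.symm (1 : F)]
  have hdnE : ∀ n : ℕ, d ^ n * E13 = E13 := by
    intro n
    induction n with
    | zero => simp
    | succ m ih => rw [pow_succ, mul_assoc, hdE, ih]
  have hEdn : ∀ n : ℕ, E13 * d ^ (n + 1) = 0 := by
    intro n
    rw [pow_succ', ← mul_assoc, hEd, zero_mul]
  refine ⟨E12, E21, E13, E12, 0, ?_⟩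
  have hkey : ((E12 * E21 - E21 * E12) ^ s *
      ((E12 * E21 - E21 * E12) + (E12 * 0 - 0 * E12)) *
      (E12 * E21 - E21 * E12) ^ t) = d ^ (s + 1 + t) := by
    rw [← hd_def]
    simp only [mul_zero, zero_mul, sub_zero, add_zero]
    rw [pow_add, pow_add, pow_one, mul_assoc]
  rw [hkey]
  have hL : d ^ (s + 1 + t) * E13 = E13 := hdnE _
  have hR : E13 * d ^ (s + 1 + t) = 0 := by
    have : s + 1 + t = (s + t) + 1 := by omega
    rw [this]; exact hEdn _
  rw [hL, hR, sub_zero]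
  intro h
  have := congrArg (fun M => M i0 i2) h
  simp [E13] at this
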